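/- Let G be a 2K₂-free graph containing a cycle. Then some longest cycle of G is dominating, i.e., there is a longest cycle C such that G − V(C) has no edges. -/

import Mathlib

open SimpleGraph

/-- `G` is `2K₂`-free: no induced pair of independent edges. -/
def TwoK2Free {V : Type*} (G : SimpleGraph V) : Prop :=
  ¬ ∃ a b c d : V, G.Adj a b ∧ G.Adj c d ∧
      a ≠ c ∧ a ≠ d ∧ b ≠ c ∧ b ≠ d ∧
      ¬ G.Adj a c ∧ ¬ G.Adj a d ∧ ¬ G.Adj b c ∧ ¬ G.Adj b d

section Auxiliary

open Walk

variable {V : Type*} {G : SimpleGraph V}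

lemma length_rotate' [DecidableEq V] {v u : V} (c : G.Walk v v) (h : u ∈ c.support) :
    (c.rotate u h).length = c.length := by
  have h1 := congrArg Walk.length (c.take_spec h)
  rw [Walk.length_append] at h1
  unfold Walk.rotate
  rw [Walk.length_append]
  omega

lemma mem_tail_of_closed {v : V} (c : G.Walk v v) (hc : ¬ c.Nil) (x : V) :
    x ∈ c.support ↔ x ∈ c.support.tail := by
  cases c with
  | nil => simp at hc
  | cons h q =>
    simp only [Walk.support_cons, List.tail_cons, List.mem_cons]
    constructor
    · rintro (rfl | hx)
      · exact q.end_mem_support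
      · exact hx
    · exact fun hx => Or.inr hx

lemma edge_ends_not_mem {x y : V} (s : G.Walk x y) (hs : s.IsPath) (hlen : 2 ≤ s.length) :
    s(x, y) ∉ s.edges := by
  cases s with
  | nil => simp at hlen
  | cons h t =>
    rename_i m
    rw [Walk.cons_isPath_iff] at hs
    simp only [Walk.edges_cons, List.mem_cons]
    rintro (heq | hmem)
    · rw [Sym2.eq_iff] at heq
      rcases heq with ⟨-, rfl⟩ | ⟨rfl, rfl⟩
      · cases t with
        | nil => simp at hlen
        | cons h2 t2 =>
          rw [Walk.cons_isPath_iff] at hs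
          exact hs.1.2 t2.end_mem_support
      · exact G.loopless.irrefl _ h
    · exact hs.2 (t.fst_mem_support_of_mem_edges hmem)

lemma appendCycle {x y : V} (s : G.Walk x y) (q : G.Walk y x)
    (hs : s.IsPath) (hq : q.IsPath) (hlen : 2 ≤ s.length) (hne : y ≠ x)
    (hmeet : ∀ w, w ∈ s.support → w ∈ q.support → w = x ∨ w = y) :
    (s.append q).IsCycle := by
  have hxs : x ∉ s.support.tail := by
    have := hs.support_nodup
    rw [s.support_eq_cons] at this
    exact (List.nodup_cons.mp this).1
  have hyq : y ∉ q.support.tail := by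
    have := hq.support_nodup
    rw [q.support_eq_cons] at this
    exact (List.nodup_cons.mp this).1
  have hsE : s(x, y) ∉ s.edges := edge_ends_not_mem s hs hlen
  have hdisj : ∀ e ∈ s.edges, e ∉ q.edges := by
    intro e hes heq
    induction e using Sym2.ind with
    | _ c d =>
      have hcd : G.Adj c d := s.adj_of_mem_edges hes
      have hc := hmeet c (s.fst_mem_support_of_mem_edges hes) (q.fst_mem_support_of_mem_edges heq)
      have hd := hmeet d (s.snd_mem_support_of_mem_edges hes) (q.snd_mem_support_of_mem_edges heq)
      rcases hc with rfl | rfl <;> rcases hd with rfl | rfl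
      · exact G.loopless.irrefl _ hcd
      · exact hsE hes
      · exact hsE (by rwa [Sym2.eq_swap] at hes)
      · exact G.loopless.irrefl _ hcd
  refine ⟨⟨?_, ?_⟩, ?_⟩
  · rw [Walk.isTrail_def, Walk.edges_append, List.nodup_append]
    exact ⟨hs.isTrail.edges_nodup, hq.isTrail.edges_nodup, fun e he f hf hef => hdisj e he (hef ▸ hf)⟩
  · intro hnil
    have h0 : (s.append q).length = 0 := by rw [hnil]; rfl
    rw [Walk.length_append] at h0
    omega
  · have htail : (s.append q).support.tail = s.support.tail ++ q.support.tail :=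
      Walk.tail_support_append s q
    rw [htail, List.nodup_append]
    refine ⟨hs.support_nodup.tail, hq.support_nodup.tail, ?_⟩
    intro w hw1 w' hw2 hww
    subst hww
    rcases hmeet w (List.mem_of_mem_tail hw1) (List.mem_of_mem_tail hw2) with rfl | rfl
    · exact hxs hw1
    · exact hyq hw2

lemma base_facts {x y z : V} {hxy : G.Adj x y} {hyz : G.Adj y z} {r : G.Walk z x}
    (hT : (Walk.cons hxy (Walk.cons hyz r)).IsCycle) :
    r.IsPath ∧ y ∉ r.support ∧ x ≠ z := by
  obtain ⟨hq, -⟩ := (Walk.cons_isCycle_iff _ _).mp hT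
  rw [Walk.cons_isPath_iff] at hq
  refine ⟨hq.1, hq.2, ?_⟩
  rintro rfl
  cases r with
  | nil =>
    have := hT.three_le_length
    simp at this
  | cons h t =>
    rw [Walk.cons_isPath_iff] at hq
    exact hq.1.2 t.end_mem_support

lemma cycle_triple {y : V} (D : G.Walk y y) (hD : D.IsCycle) :
    ∃ (x z : V) (hxy : G.Adj x y) (hyz : G.Adj y z) (r : G.Walk z x),
      (Walk.cons hxy (Walk.cons hyz r)).IsCycle ∧
      (Walk.cons hxy (Walk.cons hyz r)).length = D.length ∧
      ∀ w, (w ∈ (Walk.cons hxy (Walk.cons hyz r)).support ↔ w ∈ D.support) := by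
  have h3 := hD.three_le_length
  cases D with
  | nil => simp at h3
  | cons hyz p =>
    rename_i z
    cases p with
    | nil => simp at h3
    | cons h2 p2 =>
      obtain ⟨x, r, hxy, hps⟩ := Walk.exists_cons_eq_concat h2 p2
      rw [hps] at hD h3 ⊢
      obtain ⟨hpath, hedge⟩ := (Walk.cons_isCycle_iff _ _).mp hD
      have hnod : (r.support ++ [y]).Nodup := by
        have := hpath.support_nodup
        rwa [Walk.support_concat] at this
      rw [List.nodup_append] at hnod
      have hr : r.IsPath := (Walk.isPath_def r).mpr hnod.1
      have hyr : y ∉ r.support := fun h => hnod.2.2 y h y (List.mem_singleton_self y) rfl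
      have hxr : x ∈ r.support := r.end_mem_support
      have hzr : z ∈ r.support := r.start_mem_support
      have hxz : x ≠ z := by
        rintro rfl
        cases r with
        | nil => simp [Walk.length_concat] at h3
        | cons h t =>
          rw [Walk.cons_isPath_iff] at hr
          exact hr.2 t.end_mem_support
      have hTpath : (Walk.cons hyz r).IsPath := (Walk.cons_isPath_iff _ _).mpr ⟨hr, hyr⟩
      have hTedge : s(x, y) ∉ (Walk.cons hyz r).edges := by
        simp only [Walk.edges_cons, List.mem_cons]
        rintro (heq | hmem)
        · rw [Sym2.eq_iff] at heq
          rcases heq with ⟨rfl, -⟩ | ⟨rfl, -⟩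
          · exact G.loopless.irrefl _ hxy
          · exact hxz rfl
        · exact hyr (r.snd_mem_support_of_mem_edges hmem)
      refine ⟨x, z, hxy, hyz, r, (Walk.cons_isCycle_iff _ _).mpr ⟨hTpath, hTedge⟩, ?_, ?_⟩
      · simp [Walk.length_concat]
      · intro w
        simp only [Walk.support_cons, Walk.support_concat, List.concat_eq_append,
          List.mem_cons, List.mem_append, List.mem_singleton]
        constructor
        · rintro (rfl | rfl | h) <;> tauto
        · rintro (rfl | h | rfl | h) <;> tauto

lemma twoK2_or (hfree : TwoK2Free G) {a b c d : V} (hab : G.Adj a b) (hcd : G.Adj c d)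
    (h1 : a ≠ c) (h2 : a ≠ d) (h3 : b ≠ c) (h4 : b ≠ d) :
    G.Adj a c ∨ G.Adj a d ∨ G.Adj b c ∨ G.Adj b d := by
  by_contra h
  push_neg at h
  exact hfree ⟨a, b, c, d, hab, hcd, h1, h2, h3, h4, h.1, h.2.1, h.2.2.1, h.2.2.2⟩

section Insert

variable {L : ℕ} {x y z : V} {hxy : G.Adj x y} {hyz : G.Adj y z} {r : G.Walk z x}

lemma insert_one (hmax : ∀ (w : V) (C' : G.Walk w w), C'.IsCycle → C'.length ≤ L)
    (hT : (Walk.cons hxy (Walk.cons hyz r)).IsCycle)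
    (hTlen : (Walk.cons hxy (Walk.cons hyz r)).length = L)
    {w : V} (hw : w ∉ (Walk.cons hxy (Walk.cons hyz r)).support)
    (hyw : G.Adj y w) (hwz : G.Adj w z) : False := by
  obtain ⟨hr, hyr, hxz⟩ := base_facts hT
  simp only [Walk.support_cons, List.mem_cons, not_or] at hw
  obtain ⟨hwx, hwy, hwr⟩ := hw
  have p1 : (Walk.cons hwz Walk.nil : G.Walk w z).IsPath := by
    rw [Walk.cons_isPath_iff]
    exact ⟨Walk.IsPath.nil, by simp [hwz.ne]⟩
  have hyw' : y ≠ w := hyw.ne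
  have hyz' : y ≠ z := hyz.ne
  have hxw : x ≠ w := fun h => hwx h.symm
  have hxy' : x ≠ y := hxy.ne
  have p2 : (Walk.cons hyw (Walk.cons hwz Walk.nil)).IsPath := by
    rw [Walk.cons_isPath_iff]
    refine ⟨p1, by simp [hyw', hyz']⟩
  have p3 : (Walk.cons hxy (Walk.cons hyw (Walk.cons hwz Walk.nil))).IsPath := by
    rw [Walk.cons_isPath_iff]
    refine ⟨p2, by simp [hxy', hxw, hxz]⟩
  have hcyc := appendCycle _ r p3 hr (by simp) (Ne.symm hxz) ?_
  · have hle := hmax x _ hcyc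
    rw [Walk.length_append] at hle
    simp only [Walk.length_cons, Walk.length_nil] at hle hTlen
    omega
  · intro u hu hur
    simp only [Walk.support_cons, Walk.support_nil, List.mem_cons,
      List.not_mem_nil, or_false] at hu
    rcases hu with rfl | rfl | rfl | rfl
    · exact Or.inl rfl
    · exact absurd hur hyr
    · exact absurd hur hwr
    · exact Or.inr rfl

lemma insert_two (hmax : ∀ (w : V) (C' : G.Walk w w), C'.IsCycle → C'.length ≤ L)
    (hT : (Walk.cons hxy (Walk.cons hyz r)).IsCycle)
    (hTlen : (Walk.cons hxy (Walk.cons hyz r)).length = L)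
    {a b : V} (ha : a ∉ (Walk.cons hxy (Walk.cons hyz r)).support)
    (hb : b ∉ (Walk.cons hxy (Walk.cons hyz r)).support)
    (hya : G.Adj y a) (hab : G.Adj a b) (hbz : G.Adj b z) : False := by
  obtain ⟨hr, hyr, hxz⟩ := base_facts hT
  simp only [Walk.support_cons, List.mem_cons, not_or] at ha hb
  obtain ⟨hax, hay, har⟩ := ha
  obtain ⟨hbx, hby, hbr⟩ := hb
  have p1 : (Walk.cons hbz Walk.nil : G.Walk b z).IsPath := by
    rw [Walk.cons_isPath_iff]
    exact ⟨Walk.IsPath.nil, by simp [hbz.ne]⟩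
  have hab' : a ≠ b := hab.ne
  have haz : a ≠ z := fun h => har (h ▸ r.start_mem_support)
  have hya' : y ≠ a := fun h => hay h.symm
  have hyb : y ≠ b := fun h => hby h.symm
  have hyz' : y ≠ z := hyz.ne
  have hxy' : x ≠ y := hxy.ne
  have hxa' : x ≠ a := fun h => hax h.symm
  have hxb : x ≠ b := fun h => hbx h.symm
  have p2 : (Walk.cons hab (Walk.cons hbz Walk.nil)).IsPath := by
    rw [Walk.cons_isPath_iff]
    refine ⟨p1, by simp [hab', haz]⟩
  have p3 : (Walk.cons hya (Walk.cons hab (Walk.cons hbz Walk.nil))).IsPath := by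
    rw [Walk.cons_isPath_iff]
    refine ⟨p2, by simp [hya', hyb, hyz']⟩
  have p4 : (Walk.cons hxy (Walk.cons hya (Walk.cons hab (Walk.cons hbz Walk.nil)))).IsPath := by
    rw [Walk.cons_isPath_iff]
    refine ⟨p3, by simp [hxy', hxa', hxb, hxz]⟩
  have hcyc := appendCycle _ r p4 hr (by simp) (Ne.symm hxz) ?_
  · have hle := hmax x _ hcyc
    rw [Walk.length_append] at hle
    simp only [Walk.length_cons, Walk.length_nil] at hle hTlen
    omega
  · intro u hu hur
    simp only [Walk.support_cons, Walk.support_nil, List.mem_cons,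
      List.not_mem_nil, or_false] at hu
    rcases hu with rfl | rfl | rfl | rfl | rfl
    · exact Or.inl rfl
    · exact absurd hur hyr
    · exact absurd hur har
    · exact absurd hur hbr
    · exact Or.inr rfl

lemma cross_two (hmax : ∀ (w : V) (C' : G.Walk w w), C'.IsCycle → C'.length ≤ L)
    (hT : (Walk.cons hxy (Walk.cons hyz r)).IsCycle)
    (hTlen : (Walk.cons hxy (Walk.cons hyz r)).length = L)
    {a b : V} (ha : a ∉ (Walk.cons hxy (Walk.cons hyz r)).support)
    (hb : b ∉ (Walk.cons hxy (Walk.cons hyz r)).support)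
    (hxa : G.Adj x a) (hab : G.Adj a b) (hbz : G.Adj b z) : False := by
  obtain ⟨hr, hyr, hxz⟩ := base_facts hT
  simp only [Walk.support_cons, List.mem_cons, not_or] at ha hb
  obtain ⟨hax, hay, har⟩ := ha
  obtain ⟨hbx, hby, hbr⟩ := hb
  have p1 : (Walk.cons hbz Walk.nil : G.Walk b z).IsPath := by
    rw [Walk.cons_isPath_iff]
    exact ⟨Walk.IsPath.nil, by simp [hbz.ne]⟩
  have hab' : a ≠ b := hab.ne
  have haz : a ≠ z := fun h => har (h ▸ r.start_mem_support)
  have hxa' : x ≠ a := hxa.ne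
  have hxb : x ≠ b := fun h => hbx h.symm
  have p2 : (Walk.cons hab (Walk.cons hbz Walk.nil)).IsPath := by
    rw [Walk.cons_isPath_iff]
    refine ⟨p1, by simp [hab', haz]⟩
  have p3 : (Walk.cons hxa (Walk.cons hab (Walk.cons hbz Walk.nil))).IsPath := by
    rw [Walk.cons_isPath_iff]
    refine ⟨p2, by simp [hxa', hxb, hxz]⟩
  have hcyc := appendCycle _ r p3 hr (by simp) (Ne.symm hxz) ?_
  · have hle := hmax x _ hcyc
    rw [Walk.length_append] at hle
    simp only [Walk.length_cons, Walk.length_nil] at hle hTlen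
    omega
  · intro u hu hur
    simp only [Walk.support_cons, Walk.support_nil, List.mem_cons,
      List.not_mem_nil, or_false] at hu
    rcases hu with rfl | rfl | rfl | rfl
    · exact Or.inl rfl
    · exact absurd hur har
    · exact absurd hur hbr
    · exact Or.inr rfl

end Insert

/-- The set of edges (as ordered pairs) lying entirely outside a vertex list. -/
def outPairs (G : SimpleGraph V) (l : List V) : Set (V × V) :=
  {p | G.Adj p.1 p.2 ∧ p.1 ∉ l ∧ p.2 ∉ l}

lemma key [Fintype V] (hfree : TwoK2Free G) {L : ℕ}
    (hmax : ∀ (w : V) (C' : G.Walk w w), C'.IsCycle → C'.length ≤ L)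
    {x y z : V} {hxy : G.Adj x y} {hyz : G.Adj y z} {r : G.Walk z x}
    (hT : (Walk.cons hxy (Walk.cons hyz r)).IsCycle)
    (hTlen : (Walk.cons hxy (Walk.cons hyz r)).length = L)
    (hmin : ∀ (w : V) (C' : G.Walk w w), C'.IsCycle → C'.length = L →
      (outPairs G (Walk.cons hxy (Walk.cons hyz r)).support).ncard ≤
        (outPairs G C'.support).ncard)
    {a b : V} (hab : G.Adj a b)
    (ha : a ∉ (Walk.cons hxy (Walk.cons hyz r)).support)
    (hb : b ∉ (Walk.cons hxy (Walk.cons hyz r)).support)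
    (hnay : ¬ G.Adj a y) (hnby : ¬ G.Adj b y)
    (hax : G.Adj a x) (haz : G.Adj a z) : False := by
  obtain ⟨hr, hyr, hxz⟩ := base_facts hT
  have haT := ha
  have hbT := hb
  simp only [Walk.support_cons, List.mem_cons, not_or] at ha hb
  obtain ⟨hax', hay', har⟩ := ha
  obtain ⟨hbx', hby', hbr⟩ := hb
  have hzr : z ∈ r.support := r.start_mem_support
  have hxr : x ∈ r.support := r.end_mem_support
  have hyx : y ≠ x := fun h => hyr (h.symm ▸ hxr)
  have hyz' : y ≠ z := hyz.ne
  have hxy' : x ≠ y := hxy.ne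
  have hab' : a ≠ b := hab.ne
  -- the swapped cycle C' = x → a → z → r
  have haz' : a ≠ z := fun h => har (h ▸ hzr)
  have hxa' : x ≠ a := fun h => hax' h.symm
  have hxb : x ≠ b := fun h => hbx' h.symm
  have p1 : (Walk.cons haz Walk.nil : G.Walk a z).IsPath := by
    rw [Walk.cons_isPath_iff]
    exact ⟨Walk.IsPath.nil, by simp [haz']⟩
  have p2 : (Walk.cons hax.symm (Walk.cons haz Walk.nil)).IsPath := by
    rw [Walk.cons_isPath_iff]
    refine ⟨p1, by simp [hxa', hxz]⟩
  have hmeet : ∀ w, w ∈ (Walk.cons hax.symm (Walk.cons haz Walk.nil)).support →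
      w ∈ r.support → w = x ∨ w = z := by
    intro u hu hur
    simp only [Walk.support_cons, Walk.support_nil, List.mem_cons,
      List.not_mem_nil, or_false] at hu
    rcases hu with rfl | rfl | rfl
    · exact Or.inl rfl
    · exact absurd hur har
    · exact Or.inr rfl
  have hC' : ((Walk.cons hax.symm (Walk.cons haz Walk.nil)).append r).IsCycle :=
    appendCycle _ r p2 hr (by simp) (Ne.symm hxz) hmeet
  set C' := (Walk.cons hax.symm (Walk.cons haz Walk.nil)).append r with hC'def
  have hC'len : C'.length = L := by
    rw [hC'def, Walk.length_append]
    simp only [Walk.length_cons, Walk.length_nil] at hTlen ⊢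
    omega
  have hC'supp : ∀ w, w ∈ C'.support ↔ (w = x ∨ w = a ∨ w ∈ r.support) := by
    intro w
    rw [hC'def, Walk.mem_support_append_iff]
    simp only [Walk.support_cons, Walk.support_nil, List.mem_cons,
      List.not_mem_nil, or_false]
    constructor
    · rintro ((rfl | rfl | rfl) | h) <;> tauto
    · rintro (rfl | rfl | h) <;> tauto
  -- the common tail path q = y → z → r
  have q1 : ((Walk.cons hyz r : G.Walk y x)).IsPath :=
    (Walk.cons_isPath_iff _ _).mpr ⟨hr, hyr⟩
  -- y has no neighbours outside C'
  have hyout : ∀ c, G.Adj y c → c ∉ C'.support → False := by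
    intro c hyc hc
    rw [hC'supp] at hc
    push_neg at hc
    obtain ⟨hcx, hca, hcr⟩ := hc
    have hcy : c ≠ y := fun h => G.loopless.irrefl y (h ▸ hyc)
    have hcb : c ≠ b := fun h => hnby (by rw [h] at hyc; exact hyc.symm)
    have hcz : c ≠ z := fun h => hcr (h ▸ hzr)
    have hxc : x ≠ c := fun h => hcx h.symm
    have hac' : a ≠ c := fun h => hca h.symm
    have hcy' : c ≠ y := hcy
    have h2or : G.Adj a y ∨ G.Adj a c ∨ G.Adj b y ∨ G.Adj b c :=
      twoK2_or hfree hab hyc hay' hac' hby' (fun h => hcb h.symm)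
    rcases h2or with hay2 | hac | hby2 | hbc
    · exact hnay hay2
    · -- cycle x → a → c → y → z → r : length L + 2
      have s1 : (Walk.cons hyc.symm Walk.nil : G.Walk c y).IsPath := by
        rw [Walk.cons_isPath_iff]
        exact ⟨Walk.IsPath.nil, by simp [hcy]⟩
      have s2 : (Walk.cons hac (Walk.cons hyc.symm Walk.nil)).IsPath := by
        rw [Walk.cons_isPath_iff]
        refine ⟨s1, by simp [hac', hay']⟩
      have s3 : (Walk.cons hax.symm (Walk.cons hac (Walk.cons hyc.symm Walk.nil))).IsPath := by
        rw [Walk.cons_isPath_iff]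
        refine ⟨s2, by simp [hxa', hxc, hxy']⟩
      have hmeet2 : ∀ w, w ∈ (Walk.cons hax.symm (Walk.cons hac
          (Walk.cons hyc.symm Walk.nil))).support →
          w ∈ (Walk.cons hyz r : G.Walk y x).support → w = x ∨ w = y := by
        intro u hu huq
        simp only [Walk.support_cons, Walk.support_nil, List.mem_cons,
          List.not_mem_nil, or_false] at hu huq
        rcases hu with rfl | rfl | rfl | rfl
        · exact Or.inl rfl
        · rcases huq with rfl | h
          · exact absurd rfl hay'
          · exact absurd h har
        · rcases huq with rfl | h
          · exact absurd rfl hcy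
          · exact absurd h hcr
        · exact Or.inr rfl
      have hcyc := appendCycle _ (Walk.cons hyz r) s3 q1 (by simp) hyx hmeet2
      have hle := hmax x _ hcyc
      rw [Walk.length_append] at hle
      simp only [Walk.length_cons, Walk.length_nil] at hle hTlen
      omega
    · exact hnby hby2
    · -- cycle x → a → b → c → y → z → r : length L + 3
      have hbc' : b ≠ c := fun h => hcb h.symm
      have s1 : (Walk.cons hyc.symm Walk.nil : G.Walk c y).IsPath := by
        rw [Walk.cons_isPath_iff]
        exact ⟨Walk.IsPath.nil, by simp [hcy]⟩
      have s2 : (Walk.cons hbc (Walk.cons hyc.symm Walk.nil)).IsPath := by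
        rw [Walk.cons_isPath_iff]
        refine ⟨s1, by simp [hbc', fun h : b = y => hby' h]⟩
      have s3 : (Walk.cons hab (Walk.cons hbc (Walk.cons hyc.symm Walk.nil))).IsPath := by
        rw [Walk.cons_isPath_iff]
        refine ⟨s2, by simp [hab', hac', hay']⟩
      have s4 : (Walk.cons hax.symm (Walk.cons hab (Walk.cons hbc
          (Walk.cons hyc.symm Walk.nil)))).IsPath := by
        rw [Walk.cons_isPath_iff]
        refine ⟨s3, by simp [hxa', hxb, hxc, hxy']⟩
      have hmeet2 : ∀ w, w ∈ (Walk.cons hax.symm (Walk.cons hab (Walk.cons hbc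
          (Walk.cons hyc.symm Walk.nil)))).support →
          w ∈ (Walk.cons hyz r : G.Walk y x).support → w = x ∨ w = y := by
        intro u hu huq
        simp only [Walk.support_cons, Walk.support_nil, List.mem_cons,
          List.not_mem_nil, or_false] at hu huq
        rcases hu with rfl | rfl | rfl | rfl | rfl
        · exact Or.inl rfl
        · rcases huq with rfl | h
          · exact absurd rfl hay'
          · exact absurd h har
        · rcases huq with rfl | h
          · exact absurd rfl hby'
          · exact absurd h hbr
        · rcases huq with rfl | h
          · exact absurd rfl hcy
          · exact absurd h hcr
        · exact Or.inr rfl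
      have hcyc := appendCycle _ (Walk.cons hyz r) s4 q1 (by simp) hyx hmeet2
      have hle := hmax x _ hcyc
      rw [Walk.length_append] at hle
      simp only [Walk.length_cons, Walk.length_nil] at hle hTlen
      omega
  -- outPairs of C' is strictly contained in that of T
  have hsub : outPairs G C'.support ⊆
      outPairs G (Walk.cons hxy (Walk.cons hyz r)).support := by
    rintro ⟨c, d⟩ ⟨hadj, h1, h2⟩
    refine ⟨hadj, ?_, ?_⟩
    · intro hmem
      simp only [Walk.support_cons, List.mem_cons] at hmem
      rcases hmem with rfl | rfl | h
      · exact h1 ((hC'supp c).mpr (Or.inl rfl))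
      · exact hyout d hadj h2
      · exact h1 ((hC'supp c).mpr (Or.inr (Or.inr h)))
    · intro hmem
      simp only [Walk.support_cons, List.mem_cons] at hmem
      rcases hmem with rfl | rfl | h
      · exact h2 ((hC'supp d).mpr (Or.inl rfl))
      · exact hyout c hadj.symm h1
      · exact h2 ((hC'supp d).mpr (Or.inr (Or.inr h)))
  have hmemT : (a, b) ∈ outPairs G (Walk.cons hxy (Walk.cons hyz r)).support :=
    ⟨hab, haT, hbT⟩
  have hnmem : (a, b) ∉ outPairs G C'.support :=
    fun h => h.2.1 ((hC'supp a).mpr (Or.inr (Or.inl rfl)))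
  have hss : outPairs G C'.support ⊂
      outPairs G (Walk.cons hxy (Walk.cons hyz r)).support :=
    (Set.ssubset_iff_of_subset hsub).mpr ⟨(a, b), hmemT, hnmem⟩
  have hlt := Set.ncard_lt_ncard hss (Set.toFinite _)
  have hge := hmin x C' hC' hC'len
  omega

end Auxiliary

/-- every 2K₂-free graph containing a cycle has a longest
cycle that is dominating. -/
theorem stmt_8 {V : Type*} [Fintype V] (G : SimpleGraph V)
    (hfree : TwoK2Free G)
    (hcyc : ∃ (w : V) (C : G.Walk w w), C.IsCycle) :
    ∃ (v : V) (C : G.Walk v v), C.IsCycle ∧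
      (∀ (w : V) (C' : G.Walk w w), C'.IsCycle → C'.length ≤ C.length) ∧
      (∀ a b, G.Adj a b → a ∈ C.support ∨ b ∈ C.support) := by
  classical
  have hfree2 : TwoK2Free G := hfree
  obtain ⟨v0, C0, hC0⟩ := hcyc
  have hbound : ∀ (w : V) (C' : G.Walk w w), C'.IsCycle → C'.length ≤ Fintype.card V := by
    intro w C' hC'
    have h1 : C'.support.tail.Nodup := hC'.support_nodup
    have h2 := h1.length_le_card
    have h3 : C'.support.length = C'.length + 1 := C'.length_support
    have h4 : C'.support.tail.length = C'.support.length - 1 := C'.support.length_tail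
    omega
  set P : ℕ → Prop := fun n => ∃ (w : V) (C' : G.Walk w w), C'.IsCycle ∧ C'.length = n with hPdef
  have hPL : P (Nat.findGreatest P (Fintype.card V)) :=
    Nat.findGreatest_spec (hbound _ _ hC0) ⟨v0, C0, hC0, rfl⟩
  set L := Nat.findGreatest P (Fintype.card V) with hLdef
  have hmax : ∀ (w : V) (C' : G.Walk w w), C'.IsCycle → C'.length ≤ L :=
    fun w C' h => Nat.le_findGreatest (hbound w C' h) ⟨w, C', h, rfl⟩
  obtain ⟨v1, C1, hC1, hC1len⟩ := hPL
  set Q : ℕ → Prop := fun n => ∃ (w : V) (C' : G.Walk w w), C'.IsCycle ∧ C'.length = L ∧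
    (outPairs G C'.support).ncard = n with hQdef
  have hQ : ∃ n, Q n := ⟨_, v1, C1, hC1, hC1len, rfl⟩
  obtain ⟨v, C, hC, hClen, hCcard⟩ := Nat.find_spec hQ
  have hmin : ∀ (w : V) (C' : G.Walk w w), C'.IsCycle → C'.length = L →
      (outPairs G C.support).ncard ≤ (outPairs G C'.support).ncard := by
    intro w C' h1 h2
    rw [hCcard]
    exact Nat.find_min' hQ ⟨w, C', h1, h2, rfl⟩
  refine ⟨v, C, hC, fun w C' h => hClen ▸ hmax w C' h, ?_⟩
  intro a b hab
  by_contra hcon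
  push_neg at hcon
  obtain ⟨ha, hb⟩ := hcon
  -- Step 1: find a vertex of C not adjacent to a nor b
  obtain ⟨y, hyC, hnAy⟩ : ∃ y, y ∈ C.support ∧ ¬(G.Adj a y ∨ G.Adj b y) := by
    obtain ⟨x0, z0, h1, h2, r0, hT0, hT0len, hT0supp⟩ := cycle_triple C hC
    have haT0 : a ∉ (Walk.cons h1 (Walk.cons h2 r0)).support := fun h => ha ((hT0supp a).mp h)
    have hbT0 : b ∉ (Walk.cons h1 (Walk.cons h2 r0)).support := fun h => hb ((hT0supp b).mp h)
    have hT0len' : (Walk.cons h1 (Walk.cons h2 r0)).length = L := hT0len.trans hClen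
    have hnot : ¬((G.Adj a v ∨ G.Adj b v) ∧ (G.Adj a z0 ∨ G.Adj b z0)) := by
      rintro ⟨hv | hv, hz | hz⟩
      · exact insert_one hmax hT0 hT0len' haT0 hv.symm hz
      · exact insert_two hmax hT0 hT0len' haT0 hbT0 hv.symm hab hz
      · exact insert_two hmax hT0 hT0len' hbT0 haT0 hv.symm hab.symm hz
      · exact insert_one hmax hT0 hT0len' hbT0 hv.symm hz
    by_cases hAv : G.Adj a v ∨ G.Adj b v
    · refine ⟨z0, ?_, fun h => hnot ⟨hAv, h⟩⟩
      refine (hT0supp z0).mp ?_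
      simp only [Walk.support_cons, List.mem_cons]
      exact Or.inr (Or.inr r0.start_mem_support)
    · exact ⟨v, C.start_mem_support, hAv⟩
  -- Step 2: rotate C to start at y and take the triple around y
  have hCnil : ¬C.Nil := by
    intro h
    rw [Walk.nil_iff_length_eq] at h
    have := hC.three_le_length
    omega
  set D := C.rotate y hyC with hDdef
  have hD : D.IsCycle := hC.rotate hyC
  have hDlen : D.length = L := (length_rotate' C hyC).trans hClen
  have hDnil : ¬D.Nil := by
    intro h
    rw [Walk.nil_iff_length_eq] at h
    have := hD.three_le_length
    omega
  have hDsupp : ∀ w, w ∈ D.support ↔ w ∈ C.support := by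
    intro w
    rw [mem_tail_of_closed D hDnil, mem_tail_of_closed C hCnil,
      (Walk.support_rotate C y hyC).perm.mem_iff]
  obtain ⟨x, z, hxy, hyz, r, hT, hTlen, hTsupp⟩ := cycle_triple D hD
  have hsuppTC : ∀ w, w ∈ (Walk.cons hxy (Walk.cons hyz r)).support ↔ w ∈ C.support :=
    fun w => (hTsupp w).trans (hDsupp w)
  have haT : a ∉ (Walk.cons hxy (Walk.cons hyz r)).support := fun h => ha ((hsuppTC a).mp h)
  have hbT : b ∉ (Walk.cons hxy (Walk.cons hyz r)).support := fun h => hb ((hsuppTC b).mp h)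
  have hTlen' : (Walk.cons hxy (Walk.cons hyz r)).length = L := hTlen.trans hDlen
  push_neg at hnAy
  obtain ⟨hnay, hnby⟩ := hnAy
  have houtEq : outPairs G (Walk.cons hxy (Walk.cons hyz r)).support = outPairs G C.support :=
    Set.ext fun p =>
      ⟨fun ⟨h1, h2, h3⟩ => ⟨h1, fun m => h2 ((hsuppTC _).mpr m), fun m => h3 ((hsuppTC _).mpr m)⟩,
       fun ⟨h1, h2, h3⟩ => ⟨h1, fun m => h2 ((hsuppTC _).mp m), fun m => h3 ((hsuppTC _).mp m)⟩⟩
  have hminT : ∀ (w : V) (C'' : G.Walk w w), C''.IsCycle → C''.length = L →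
      (outPairs G (Walk.cons hxy (Walk.cons hyz r)).support).ncard ≤
        (outPairs G C''.support).ncard := by
    intro w C'' h1 h2
    rw [houtEq]
    exact hmin w C'' h1 h2
  -- distinctness
  have hxT : x ∈ (Walk.cons hxy (Walk.cons hyz r)).support := Walk.start_mem_support _
  have hyT : y ∈ (Walk.cons hxy (Walk.cons hyz r)).support := by
    simp [Walk.support_cons]
  have hzT : z ∈ (Walk.cons hxy (Walk.cons hyz r)).support := by
    simp [Walk.support_cons, r.start_mem_support]
  have hax' : a ≠ x := fun h => haT (h ▸ hxT)
  have hay' : a ≠ y := fun h => haT (h ▸ hyT)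
  have haz' : a ≠ z := fun h => haT (h ▸ hzT)
  have hbx' : b ≠ x := fun h => hbT (h ▸ hxT)
  have hby' : b ≠ y := fun h => hbT (h ▸ hyT)
  have hbz' : b ≠ z := fun h => hbT (h ▸ hzT)
  -- 2K₂-freeness applied to edges (a,b) and (x,y), (y,z)
  have h1 : G.Adj a x ∨ G.Adj a y ∨ G.Adj b x ∨ G.Adj b y :=
    twoK2_or hfree2 hab hxy hax' hay' hbx' hby'
  have h2 : G.Adj a y ∨ G.Adj a z ∨ G.Adj b y ∨ G.Adj b z :=
    twoK2_or hfree2 hab hyz hay' haz' hby' hbz'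
  have hx : G.Adj a x ∨ G.Adj b x := by
    rcases h1 with h | h | h | h
    · exact Or.inl h
    · exact absurd h hnay
    · exact Or.inr h
    · exact absurd h hnby
  have hz : G.Adj a z ∨ G.Adj b z := by
    rcases h2 with h | h | h | h
    · exact absurd h hnay
    · exact Or.inl h
    · exact absurd h hnby
    · exact Or.inr h
  rcases hx with hax2 | hbx2 <;> rcases hz with haz2 | hbz2
  · exact key hfree2 hmax hT hTlen' hminT hab haT hbT hnay hnby hax2 haz2
  · exact cross_two hmax hT hTlen' haT hbT hax2.symm hab hbz2
  · exact cross_two hmax hT hTlen' hbT haT hbx2.symm hab.symm haz2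
  · exact key hfree2 hmax hT hTlen' hminT hab.symm hbT haT hnby hnay hbx2 hbz2
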